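/- The smallest eigenvalue of a 𝓑_p ∩ 𝓐_∞ matrix weight is a scalar reverse Hölder weight: Let n, d ≥ 1 and 1 < p < ∞. If V is a matrix weight on ℝⁿ with V ∈ 𝓑_p ∩ 𝓐_∞, then the scalar function λ₁, where λ₁(x) is the smallest eigenvalue of V(x), belongs to the scalar reverse Hölder class B_p (with a constant depending only on p, the 𝓑_p constant C_V of V, and the 𝓐_∞ data of V). -/

import Mathlib

open MeasureTheory
open scoped ComplexOrder

noncomputable section

/-- The open cube in `ℝⁿ` centered at `x` with half side length `r` (side length `2r`). -/
def cube {n : ℕ} (x : Fin n → ℝ) (r : ℝ) : Set (Fin n → ℝ) :=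
  {y | ∀ i, |y i - x i| < r}

/-- Entrywise integral of a real matrix-valued function over a set. -/
def matInt {n d : ℕ} (V : (Fin n → ℝ) → Matrix (Fin d) (Fin d) ℝ)
    (s : Set (Fin n → ℝ)) : Matrix (Fin d) (Fin d) ℝ :=
  Matrix.of fun i j => ∫ y in s, V y i j

/-- Entrywise average of a real matrix-valued function over a set. -/
def matAvg {n d : ℕ} (V : (Fin n → ℝ) → Matrix (Fin d) (Fin d) ℝ)
    (s : Set (Fin n → ℝ)) : Matrix (Fin d) (Fin d) ℝ :=
  Matrix.of fun i j => ⨍ y in s, V y i j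

/-- The quadratic form `⟨A e, e⟩`. -/
def qf {d : ℕ} (A : Matrix (Fin d) (Fin d) ℝ) (e : Fin d → ℝ) : ℝ :=
  dotProduct e (A.mulVec e)

/-- Squared Euclidean norm of a real vector. -/
def vnormSq {d : ℕ} (e : Fin d → ℝ) : ℝ := ∑ i, e i ^ 2

/-- The Euclidean operator norm of a real square matrix (its largest singular value). -/
def matOpNorm {d : ℕ} (A : Matrix (Fin d) (Fin d) ℝ) : ℝ :=
  sSup {t : ℝ | ∃ e : Fin d → ℝ, vnormSq e = 1 ∧ t = Real.sqrt (vnormSq (A.mulVec e))}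

/-- `V` is a matrix weight: measurable, a.e. symmetric positive semidefinite, and with
locally integrable operator norm. -/
def IsMatrixWeight {n d : ℕ} (V : (Fin n → ℝ) → Matrix (Fin d) (Fin d) ℝ) : Prop :=
  (∀ i j, Measurable fun x => V x i j) ∧
  (∀ᵐ (x : Fin n → ℝ) ∂volume, (V x).PosSemidef) ∧
  ∀ (x : Fin n → ℝ) (r : ℝ), 0 < r → IntegrableOn (fun y => matOpNorm (V y)) (cube x r)

/-- The matrix reverse Hölder class `𝓑_p` with constant `C`. -/
def MemBp {n d : ℕ} (p C : ℝ) (V : (Fin n → ℝ) → Matrix (Fin d) (Fin d) ℝ) : Prop :=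
  (∀ (x : Fin n → ℝ) (r : ℝ), 0 < r →
    IntegrableOn (fun y => matOpNorm (V y) ^ p) (cube x r)) ∧
  ∀ (x : Fin n → ℝ) (r : ℝ), 0 < r → ∀ e : Fin d → ℝ,
    (⨍ y in cube x r, qf (V y) e ^ p) ^ (1 / p) ≤ C * qf (matAvg V (cube x r)) e

/-- The scalar reverse Hölder class `B_p` with constant `C`. -/
def MemBpScalar {n : ℕ} (p C : ℝ) (v : (Fin n → ℝ) → ℝ) : Prop :=
  (∀ (x : Fin n → ℝ) (r : ℝ), 0 < r → IntegrableOn (fun y => v y ^ p) (cube x r)) ∧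
  ∀ (x : Fin n → ℝ) (r : ℝ), 0 < r →
    (⨍ y in cube x r, v y ^ p) ^ (1 / p) ≤ C * ⨍ y in cube x r, v y

/-- The averaged matrix `Ψ(x,r;V) = r^{2-n} ∫_{Q(x,r)} V`. -/
def Psi {n d : ℕ} (x : Fin n → ℝ) (r : ℝ)
    (V : (Fin n → ℝ) → Matrix (Fin d) (Fin d) ℝ) : Matrix (Fin d) (Fin d) ℝ :=
  r ^ ((2 : ℝ) - n) • matInt V (cube x r)

/-- The nondegeneracy class `ND`. -/
def MemND {n d : ℕ} (V : (Fin n → ℝ) → Matrix (Fin d) (Fin d) ℝ) : Prop :=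
  ∀ E : Set (Fin n → ℝ), MeasurableSet E → 0 < volume E → (matInt V E).PosDef

/-- The set of radii used to define the lower auxiliary function. -/
def lowerSet {n d : ℕ} (V : (Fin n → ℝ) → Matrix (Fin d) (Fin d) ℝ)
    (x : Fin n → ℝ) : Set ℝ :=
  {r : ℝ | 0 < r ∧ ∃ e : Fin d → ℝ, vnormSq e = 1 ∧ qf (Psi x r V) e ≤ 1}

/-- The lower auxiliary function `m̲(x,V)`. -/
def mLower {n d : ℕ} (V : (Fin n → ℝ) → Matrix (Fin d) (Fin d) ℝ) (x : Fin n → ℝ) : ℝ :=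
  (sSup (lowerSet V x))⁻¹

/-- The set of radii used to define the upper auxiliary function. -/
def upperSet {n d : ℕ} (V : (Fin n → ℝ) → Matrix (Fin d) (Fin d) ℝ)
    (x : Fin n → ℝ) : Set ℝ :=
  {r : ℝ | 0 < r ∧ matOpNorm (Psi x r V) ≤ 1}

/-- The upper auxiliary function `m̄(x,V)`. -/
def mUpper {n d : ℕ} (V : (Fin n → ℝ) → Matrix (Fin d) (Fin d) ℝ) (x : Fin n → ℝ) : ℝ :=
  (sSup (upperSet V x))⁻¹

/-- The set of radii used to define the scalar auxiliary function. -/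
def scalSet {n : ℕ} (v : (Fin n → ℝ) → ℝ) (x : Fin n → ℝ) : Set ℝ :=
  {r : ℝ | 0 < r ∧ r ^ ((2 : ℝ) - n) * ∫ y in cube x r, v y ≤ 1}

/-- The scalar auxiliary function `m(x,v)`. -/
def mScal {n : ℕ} (v : (Fin n → ℝ) → ℝ) (x : Fin n → ℝ) : ℝ :=
  (sSup (scalSet v x))⁻¹

/-- The positive semidefinite square root of a matrix (junk value `0` off the
positive semidefinite matrices). -/
def msqrt {d : ℕ} (A : Matrix (Fin d) (Fin d) ℝ) : Matrix (Fin d) (Fin d) ℝ :=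
  @dite _ A.PosSemidef (Classical.dec _) (fun h => h.1.eigenvectorUnitary.1 *
    Matrix.diagonal (fun i => Real.sqrt (h.1.eigenvalues i)) * star h.1.eigenvectorUnitary.1) fun _ => 0

/-- The noncommutativity class `NC` with constant `N`. -/
def MemNC {n d : ℕ} (N : ℝ) (V : (Fin n → ℝ) → Matrix (Fin d) (Fin d) ℝ) : Prop :=
  ∀ (x : Fin n → ℝ) (e : Fin d → ℝ),
    N * vnormSq e ≤
      ∫ y in cube x (mLower V x)⁻¹,
        qf (msqrt (V y) * (matInt V (cube x (mLower V x)⁻¹))⁻¹ * msqrt (V y)) e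

/-- The matrix `𝓐_∞` class. -/
def MemAinf {n d : ℕ} (V : (Fin n → ℝ) → Matrix (Fin d) (Fin d) ℝ) : Prop :=
  ∀ ε : ℝ, 0 < ε → ∃ δ : ℝ, 0 < δ ∧ ∀ (x : Fin n → ℝ) (r : ℝ), 0 < r →
    ENNReal.ofReal (1 - ε) * volume (cube x r) ≤
      volume {y ∈ cube x r | (V y - δ • matAvg V (cube x r)).PosSemidef}

/-- The smallest eigenvalue of a symmetric matrix (as the infimum of the Rayleigh
quotient over the unit sphere). -/
def lam1 {d : ℕ} (A : Matrix (Fin d) (Fin d) ℝ) : ℝ :=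
  sInf {t : ℝ | ∃ e : Fin d → ℝ, vnormSq e = 1 ∧ t = qf A e}

/-- Squared Frobenius norm of the Jacobian matrix `Du(x)`. -/
def jacFrobSq {n d : ℕ} (u : (Fin n → ℝ) → Fin d → ℝ) (x : Fin n → ℝ) : ℝ :=
  ∑ j, ∑ i, (fderiv ℝ u x (Pi.single i 1) j) ^ 2

/-! ### Complex (Hermitian) versions -/

/-- The (real-valued) quadratic form `⟨A e, e⟩` of a Hermitian matrix. -/
def qfC {d : ℕ} (A : Matrix (Fin d) (Fin d) ℂ) (e : Fin d → ℂ) : ℝ :=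
  (dotProduct (star e) (A.mulVec e)).re

/-- Squared Euclidean norm of a complex vector. -/
def vnormSqC {d : ℕ} (e : Fin d → ℂ) : ℝ := ∑ i, Complex.normSq (e i)

/-- Entrywise integral of a complex matrix-valued function over a set. -/
def matIntC {n d : ℕ} (V : (Fin n → ℝ) → Matrix (Fin d) (Fin d) ℂ)
    (s : Set (Fin n → ℝ)) : Matrix (Fin d) (Fin d) ℂ :=
  Matrix.of fun i j => ∫ y in s, V y i j

/-- Entrywise average of a complex matrix-valued function over a set. -/
def matAvgC {n d : ℕ} (V : (Fin n → ℝ) → Matrix (Fin d) (Fin d) ℂ)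
    (s : Set (Fin n → ℝ)) : Matrix (Fin d) (Fin d) ℂ :=
  Matrix.of fun i j => ⨍ y in s, V y i j

/-- The Euclidean operator norm of a complex square matrix. -/
def matOpNormC {d : ℕ} (A : Matrix (Fin d) (Fin d) ℂ) : ℝ :=
  sSup {t : ℝ | ∃ e : Fin d → ℂ, vnormSqC e = 1 ∧ t = Real.sqrt (vnormSqC (A.mulVec e))}

/-- `V` is a Hermitian matrix weight. -/
def IsHermWeight {n d : ℕ} (V : (Fin n → ℝ) → Matrix (Fin d) (Fin d) ℂ) : Prop :=
  (∀ i j, Measurable fun x => V x i j) ∧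
  (∀ᵐ (x : Fin n → ℝ) ∂volume, (V x).PosSemidef) ∧
  ∀ (x : Fin n → ℝ) (r : ℝ), 0 < r → IntegrableOn (fun y => matOpNormC (V y)) (cube x r)

/-- The nondegeneracy class `ND` for Hermitian weights. -/
def MemNDC {n d : ℕ} (V : (Fin n → ℝ) → Matrix (Fin d) (Fin d) ℂ) : Prop :=
  ∀ E : Set (Fin n → ℝ), MeasurableSet E → 0 < volume E → (matIntC V E).PosDef

/-- The matrix `𝓐_∞` class for Hermitian weights. -/
def MemAinfC {n d : ℕ} (V : (Fin n → ℝ) → Matrix (Fin d) (Fin d) ℂ) : Prop :=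
  ∀ ε : ℝ, 0 < ε → ∃ δ : ℝ, 0 < δ ∧ ∀ (x : Fin n → ℝ) (r : ℝ), 0 < r →
    ENNReal.ofReal (1 - ε) * volume (cube x r) ≤
      volume {y ∈ cube x r | (V y - δ • matAvgC V (cube x r)).PosSemidef}

/-- The geometric average `exp(⨍_s ln w)` of a nonnegative function, with the
conventions `ln 0 = -∞` and `exp (-∞) = 0`. -/
def geomMean {n : ℕ} (w : (Fin n → ℝ) → ℝ) (s : Set (Fin n → ℝ)) : ℝ :=
  @ite _ ((∀ᵐ y ∂(volume.restrict s), 0 < w y) ∧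
      IntegrableOn (fun y => Real.log (w y)) s) (Classical.dec _)
    (Real.exp (⨍ y in s, Real.log (w y))) 0

/-- The scalar `A_∞` class. -/
def ScalarAinf {n : ℕ} (w : (Fin n → ℝ) → ℝ) : Prop :=
  ∀ ε : ℝ, 0 < ε → ∃ δ : ℝ, 0 < δ ∧ ∀ (x : Fin n → ℝ) (r : ℝ), 0 < r →
    ENNReal.ofReal (1 - ε) * volume (cube x r) ≤
      volume {y ∈ cube x r | δ * ⨍ z in cube x r, w z ≤ w y}

end

section Aux

open MeasureTheory Finset

variable {n d : ℕ}

/-! ### Cube facts -/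

lemma cube_eq_pi (x : Fin n → ℝ) (r : ℝ) :
    cube x r = Set.pi Set.univ (fun i => Set.Ioo (x i - r) (x i + r)) := by
  ext y
  simp only [cube, Set.mem_setOf_eq, Set.mem_pi, Set.mem_univ, forall_true_left,
    Set.mem_Ioo, abs_lt]
  constructor
  · intro h i; have := h i; constructor <;> linarith [(h i).1, (h i).2]
  · intro h i; have := h i; constructor <;> linarith [(h i).1, (h i).2]

lemma measurableSet_cube (x : Fin n → ℝ) (r : ℝ) : MeasurableSet (cube x r) := by
  rw [cube_eq_pi]; exact MeasurableSet.univ_pi fun i => measurableSet_Ioo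

lemma volume_cube (x : Fin n → ℝ) (r : ℝ) (hr : 0 < r) :
    volume (cube x r) = ENNReal.ofReal (2 * r) ^ n := by
  rw [cube_eq_pi, volume_pi_pi]
  have : ∀ i : Fin n, volume (Set.Ioo (x i - r) (x i + r)) = ENNReal.ofReal (2 * r) := by
    intro i; rw [Real.volume_Ioo]; ring_nf
  simp only [this, Finset.prod_const, Finset.card_univ, Fintype.card_fin]

lemma volume_cube_pos (x : Fin n → ℝ) (r : ℝ) (hr : 0 < r) : 0 < volume (cube x r) := by
  rw [volume_cube x r hr]
  exact ENNReal.pow_pos (by simp [ENNReal.ofReal_pos]; linarith) n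

lemma volume_cube_lt_top (x : Fin n → ℝ) (r : ℝ) (hr : 0 < r) : volume (cube x r) < ⊤ := by
  rw [volume_cube x r hr]
  exact ENNReal.pow_lt_top ENNReal.ofReal_lt_top

lemma volume_cube_toReal_pos (x : Fin n → ℝ) (r : ℝ) (hr : 0 < r) :
    0 < (volume (cube x r)).toReal :=
  ENNReal.toReal_pos (volume_cube_pos x r hr).ne' (volume_cube_lt_top x r hr).ne

/-! ### Vector and quadratic form facts -/

lemma vnormSq_nonneg (e : Fin d → ℝ) : 0 ≤ vnormSq e :=
  Finset.sum_nonneg fun i _ => sq_nonneg _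

lemma vnormSq_single (i : Fin d) : vnormSq (Pi.single i (1 : ℝ)) = 1 := by
  unfold vnormSq
  rw [Finset.sum_eq_single i]
  · simp
  · intro j _ hj; simp [Pi.single_apply, hj]
  · simp

lemma abs_le_one_of_unit {e : Fin d → ℝ} (he : vnormSq e = 1) (i : Fin d) : |e i| ≤ 1 := by
  have h1 : e i ^ 2 ≤ 1 := by
    rw [← he]
    exact Finset.single_le_sum (fun j _ => sq_nonneg (e j)) (Finset.mem_univ i)
  nlinarith [abs_nonneg (e i), sq_abs (e i)]

lemma continuous_vnormSq : Continuous (vnormSq : (Fin d → ℝ) → ℝ) := by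
  unfold vnormSq
  exact continuous_finset_sum _ fun i _ => (continuous_apply i).pow 2

lemma isCompact_sphere' : IsCompact {e : Fin d → ℝ | vnormSq e = 1} := by
  apply Metric.isCompact_of_isClosed_isBounded
  · exact isClosed_singleton.preimage continuous_vnormSq
  · apply Bornology.IsBounded.subset (Metric.isBounded_closedBall (x := (0 : Fin d → ℝ)) (r := 1))
    intro e he
    simp only [Metric.mem_closedBall, dist_zero_right]
    apply pi_norm_le_iff_of_nonneg zero_le_one |>.2
    intro i
    simpa using abs_le_one_of_unit he i

lemma sphere_nonempty' (hd : 0 < d) : ({e : Fin d → ℝ | vnormSq e = 1}).Nonempty :=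
  ⟨Pi.single ⟨0, hd⟩ 1, vnormSq_single _⟩

lemma qf_expand (A : Matrix (Fin d) (Fin d) ℝ) (e : Fin d → ℝ) :
    qf A e = ∑ i, ∑ j, e i * e j * A i j := by
  unfold qf dotProduct Matrix.mulVec
  refine Finset.sum_congr rfl fun i _ => ?_
  show e i * dotProduct (A i) e = _
  unfold dotProduct
  rw [Finset.mul_sum]
  exact Finset.sum_congr rfl fun j _ => by ring

lemma qf_sub (A B : Matrix (Fin d) (Fin d) ℝ) (e : Fin d → ℝ) :
    qf (A - B) e = qf A e - qf B e := by
  simp only [qf_expand, Matrix.sub_apply, mul_sub, Finset.sum_sub_distrib]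

lemma qf_smul (c : ℝ) (A : Matrix (Fin d) (Fin d) ℝ) (e : Fin d → ℝ) :
    qf (c • A) e = c * qf A e := by
  simp only [qf_expand, Matrix.smul_apply, smul_eq_mul, Finset.mul_sum]
  exact Finset.sum_congr rfl fun i _ => Finset.sum_congr rfl fun j _ => by ring

lemma abs_qf_le {e : Fin d → ℝ} (he : vnormSq e = 1) (A : Matrix (Fin d) (Fin d) ℝ) :
    |qf A e| ≤ ∑ i, ∑ j, |A i j| := by
  rw [qf_expand]
  refine (Finset.abs_sum_le_sum_abs _ _).trans ?_
  refine Finset.sum_le_sum fun i _ => (Finset.abs_sum_le_sum_abs _ _).trans ?_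
  refine Finset.sum_le_sum fun j _ => ?_
  rw [abs_mul, abs_mul]
  calc |e i| * |e j| * |A i j| ≤ 1 * 1 * |A i j| := by
        apply mul_le_mul_of_nonneg_right _ (abs_nonneg _)
        exact mul_le_mul (abs_le_one_of_unit he i) (abs_le_one_of_unit he j)
          (abs_nonneg _) zero_le_one
    _ = |A i j| := by ring

lemma qf_nonneg_of_psd {A : Matrix (Fin d) (Fin d) ℝ} (h : A.PosSemidef) (e : Fin d → ℝ) :
    0 ≤ qf A e := by
  have h2 := h.dotProduct_mulVec_nonneg e
  rwa [show star e = e from funext fun i => star_trivial _] at h2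

/-! ### lam1 facts -/

lemma qfSet_bddBelow (A : Matrix (Fin d) (Fin d) ℝ) :
    BddBelow {t : ℝ | ∃ e : Fin d → ℝ, vnormSq e = 1 ∧ t = qf A e} := by
  refine ⟨-(∑ i, ∑ j, |A i j|), fun t ⟨e, he, ht⟩ => ?_⟩
  rw [ht]
  have := abs_qf_le he A
  linarith [neg_abs_le (qf A e)]

lemma lam1_le_qf {e : Fin d → ℝ} (he : vnormSq e = 1) (A : Matrix (Fin d) (Fin d) ℝ) :
    lam1 A ≤ qf A e :=
  csInf_le (qfSet_bddBelow A) ⟨e, he, rfl⟩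

lemma le_lam1 (hd : 0 < d) {A : Matrix (Fin d) (Fin d) ℝ} {c : ℝ}
    (h : ∀ e : Fin d → ℝ, vnormSq e = 1 → c ≤ qf A e) : c ≤ lam1 A := by
  apply le_csInf
  · exact ⟨qf A (Pi.single ⟨0, hd⟩ 1), Pi.single ⟨0, hd⟩ 1, vnormSq_single _, rfl⟩
  · rintro t ⟨e, he, rfl⟩; exact h e he

lemma lam1_nonneg (hd : 0 < d) {A : Matrix (Fin d) (Fin d) ℝ} (h : A.PosSemidef) :
    0 ≤ lam1 A :=
  le_lam1 hd fun e _ => qf_nonneg_of_psd h e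

lemma continuous_qf_e (A : Matrix (Fin d) (Fin d) ℝ) : Continuous fun e => qf A e := by
  simp only [qf_expand]
  exact continuous_finset_sum _ fun i _ => continuous_finset_sum _ fun j _ =>
    (((continuous_apply i).mul (continuous_apply j)).mul continuous_const)

lemma lam1_attained (hd : 0 < d) (A : Matrix (Fin d) (Fin d) ℝ) :
    ∃ e : Fin d → ℝ, vnormSq e = 1 ∧ lam1 A = qf A e := by
  obtain ⟨e, heS, hmin⟩ := isCompact_sphere'.exists_isMinOn (sphere_nonempty' hd)
    (continuous_qf_e A).continuousOn
  refine ⟨e, heS, le_antisymm (lam1_le_qf heS A) ?_⟩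
  apply le_lam1 hd
  intro f hf
  exact hmin hf

/-! ### operator norm facts -/

lemma opSet_eq_image (A : Matrix (Fin d) (Fin d) ℝ) :
    {t : ℝ | ∃ e : Fin d → ℝ, vnormSq e = 1 ∧ t = Real.sqrt (vnormSq (A.mulVec e))} =
      (fun e => Real.sqrt (vnormSq (A.mulVec e))) '' {e | vnormSq e = 1} := by
  ext t; simp [eq_comm]

lemma continuous_sqrt_vnormSq_mulVec (A : Matrix (Fin d) (Fin d) ℝ) :
    Continuous fun e : Fin d → ℝ => Real.sqrt (vnormSq (A.mulVec e)) := by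
  apply Real.continuous_sqrt.comp
  apply continuous_vnormSq.comp
  apply continuous_pi
  intro i
  show Continuous fun e : Fin d → ℝ => dotProduct (A i) e
  unfold dotProduct
  exact continuous_finset_sum _ fun j _ => continuous_const.mul (continuous_apply j)

lemma opSet_bddAbove (A : Matrix (Fin d) (Fin d) ℝ) :
    BddAbove {t : ℝ | ∃ e : Fin d → ℝ, vnormSq e = 1 ∧ t = Real.sqrt (vnormSq (A.mulVec e))} := by
  rw [opSet_eq_image]
  exact (isCompact_sphere'.image (continuous_sqrt_vnormSq_mulVec A)).bddAbove

lemma sqrt_le_opNorm {e : Fin d → ℝ} (he : vnormSq e = 1) (A : Matrix (Fin d) (Fin d) ℝ) :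
    Real.sqrt (vnormSq (A.mulVec e)) ≤ matOpNorm A :=
  le_csSup (opSet_bddAbove A) ⟨e, he, rfl⟩

lemma mulVec_single_eq (A : Matrix (Fin d) (Fin d) ℝ) (j : Fin d) :
    A.mulVec (Pi.single j 1) = fun k => A k j := by
  funext k
  show dotProduct (A k) (Pi.single j 1) = A k j
  unfold dotProduct
  rw [Finset.sum_eq_single j]
  · simp
  · intro i _ hi; simp [Pi.single_apply, hi]
  · simp

lemma entry_abs_le_opNorm (A : Matrix (Fin d) (Fin d) ℝ) (i j : Fin d) :
    |A i j| ≤ matOpNorm A := by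
  have h1 := sqrt_le_opNorm (vnormSq_single j) A
  rw [mulVec_single_eq] at h1
  refine le_trans ?_ h1
  rw [show |A i j| = Real.sqrt ((A i j) ^ 2) from (Real.sqrt_sq_eq_abs _).symm]
  apply Real.sqrt_le_sqrt
  exact Finset.single_le_sum (f := fun k => A k j ^ 2) (fun k _ => sq_nonneg _)
    (Finset.mem_univ i)

lemma matOpNorm_nonneg (hd : 0 < d) (A : Matrix (Fin d) (Fin d) ℝ) : 0 ≤ matOpNorm A :=
  le_trans (Real.sqrt_nonneg _) (sqrt_le_opNorm (vnormSq_single ⟨0, hd⟩) A)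

lemma qf_le_opNorm {e : Fin d → ℝ} (he : vnormSq e = 1) (A : Matrix (Fin d) (Fin d) ℝ) :
    qf A e ≤ matOpNorm A := by
  refine le_trans ?_ (sqrt_le_opNorm he A)
  have hcs := Finset.sum_mul_sq_le_sq_mul_sq Finset.univ e (A.mulVec e)
  have hq : qf A e = ∑ i, e i * A.mulVec e i := rfl
  calc qf A e ≤ |qf A e| := le_abs_self _
    _ = Real.sqrt (qf A e ^ 2) := (Real.sqrt_sq_eq_abs _).symm
    _ ≤ Real.sqrt (vnormSq (A.mulVec e)) := by
        apply Real.sqrt_le_sqrt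
        calc qf A e ^ 2 ≤ (∑ i, e i ^ 2) * ∑ i, A.mulVec e i ^ 2 := by rw [hq]; exact hcs
          _ = vnormSq (A.mulVec e) := by
              rw [show (∑ i, e i ^ 2) = vnormSq e from rfl, he, one_mul]; rfl

lemma lam1_le_opNorm (hd : 0 < d) (A : Matrix (Fin d) (Fin d) ℝ) :
    lam1 A ≤ matOpNorm A :=
  le_trans (lam1_le_qf (vnormSq_single (⟨0, hd⟩ : Fin d)) A)
    (qf_le_opNorm (vnormSq_single _) A)

/-! ### Lipschitz continuity and measurability of lam1 -/

lemma lam1_sub_le (hd : 0 < d) (A B : Matrix (Fin d) (Fin d) ℝ) :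
    lam1 A ≤ lam1 B + ∑ i, ∑ j, |A i j - B i j| := by
  rw [← sub_le_iff_le_add]
  apply le_lam1 hd
  intro e he
  have h1 : qf A e - qf B e = qf (A - B) e := (qf_sub A B e).symm
  have h2 : |qf (A - B) e| ≤ ∑ i, ∑ j, |A i j - B i j| := by
    have := abs_qf_le he (A - B)
    simpa [Matrix.sub_apply] using this
  have h3 := lam1_le_qf he A
  have h4 := le_abs_self (qf (A - B) e)
  linarith

lemma continuous_lam1_pi (hd : 0 < d) :
    Continuous fun M : Fin d → Fin d → ℝ => lam1 (Matrix.of M) := by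
  apply LipschitzWith.continuous (K := (d * d : ℕ))
  apply LipschitzWith.of_dist_le_mul
  intro M M'
  rw [Real.dist_eq, abs_sub_le_iff]
  have key : ∀ P P' : Fin d → Fin d → ℝ,
      lam1 (Matrix.of P) - lam1 (Matrix.of P') ≤ (d * d : ℕ) * dist P P' := by
    intro P P'
    have h1 := lam1_sub_le hd (Matrix.of P) (Matrix.of P')
    have h2 : ∑ i, ∑ j, |Matrix.of P i j - Matrix.of P' i j| ≤ (d * d : ℕ) * dist P P' := by
      calc ∑ i, ∑ j, |Matrix.of P i j - Matrix.of P' i j|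
          ≤ ∑ _i : Fin d, ∑ _j : Fin d, dist P P' := by
            refine Finset.sum_le_sum fun i _ => Finset.sum_le_sum fun j _ => ?_
            have ha : |Matrix.of P i j - Matrix.of P' i j| = dist (P i j) (P' i j) :=
              (Real.dist_eq _ _).symm
            rw [ha]
            exact (dist_le_pi_dist (P i) (P' i) j).trans (dist_le_pi_dist P P' i)
        _ = (d * d : ℕ) * dist P P' := by
            simp [Finset.sum_const, Finset.card_univ, nsmul_eq_mul]; ring
    linarith
  constructor
  · have h := key M M'
    refine le_trans h (le_of_eq ?_)
    push_cast; ring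
  · have h := key M' M
    rw [dist_comm] at h
    refine le_trans h (le_of_eq ?_)
    push_cast; ring

lemma measurable_lam1V {V : (Fin n → ℝ) → Matrix (Fin d) (Fin d) ℝ} (hd : 0 < d)
    (hm : ∀ i j, Measurable fun x => V x i j) :
    Measurable fun x => lam1 (V x) := by
  have : (fun x => lam1 (V x)) =
      (fun M : Fin d → Fin d → ℝ => lam1 (Matrix.of M)) ∘ (fun x i j => V x i j) := rfl
  rw [this]
  exact (continuous_lam1_pi hd).measurable.comp
    (measurable_pi_lambda _ fun i => measurable_pi_lambda _ fun j => hm i j)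

lemma measurable_qfV {V : (Fin n → ℝ) → Matrix (Fin d) (Fin d) ℝ}
    (hm : ∀ i j, Measurable fun x => V x i j) (e : Fin d → ℝ) :
    Measurable fun x => qf (V x) e := by
  simp only [qf_expand]
  exact Finset.measurable_sum _ fun i _ => Finset.measurable_sum _ fun j _ =>
    (hm i j).const_mul _

/-! ### Integrability on cubes -/

section Int

variable {V : (Fin n → ℝ) → Matrix (Fin d) (Fin d) ℝ}

lemma intEntry (hW : IsMatrixWeight V) (x : Fin n → ℝ) {r : ℝ} (hr : 0 < r) (i j : Fin d) :
    IntegrableOn (fun y => V y i j) (cube x r) := by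
  apply Integrable.mono' (hW.2.2 x r hr) ((hW.1 i j).aestronglyMeasurable)
  filter_upwards with y
  rw [Real.norm_eq_abs]
  exact entry_abs_le_opNorm (V y) i j

lemma intQf (hW : IsMatrixWeight V) (x : Fin n → ℝ) {r : ℝ} (hr : 0 < r) (e : Fin d → ℝ) :
    IntegrableOn (fun y => qf (V y) e) (cube x r) := by
  have : (fun y => qf (V y) e) = fun y => ∑ i, ∑ j, e i * e j * V y i j := by
    funext y; exact qf_expand (V y) e
  rw [this]
  apply integrable_finset_sum
  intro i _
  apply integrable_finset_sum
  intro j _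
  exact (intEntry hW x hr i j).const_mul _

lemma avg_qf (hW : IsMatrixWeight V) (x : Fin n → ℝ) {r : ℝ} (hr : 0 < r) (e : Fin d → ℝ) :
    qf (matAvg V (cube x r)) e = ⨍ y in cube x r, qf (V y) e := by
  have hint : ∫ y in cube x r, qf (V y) e = ∑ i, ∑ j, e i * e j * ∫ y in cube x r, V y i j := by
    have h1 : (fun y => qf (V y) e) = fun y => ∑ i, ∑ j, e i * e j * V y i j := by
      funext y; exact qf_expand (V y) e
    rw [h1, integral_finset_sum _ (fun i _ => integrable_finset_sum _
      (fun j _ => (intEntry hW x hr i j).const_mul _))]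
    refine Finset.sum_congr rfl fun i _ => ?_
    rw [integral_finset_sum _ (fun j _ => (intEntry hW x hr i j).const_mul _)]
    exact Finset.sum_congr rfl fun j _ => integral_const_mul _ _
  rw [setAverage_eq, hint, qf_expand, smul_eq_mul, Finset.mul_sum]
  refine Finset.sum_congr rfl fun i _ => ?_
  rw [Finset.mul_sum]
  refine Finset.sum_congr rfl fun j _ => ?_
  have : matAvg V (cube x r) i j =
      (volume (cube x r)).toReal⁻¹ * ∫ y in cube x r, V y i j := by
    show (⨍ y in cube x r, V y i j) = _
    rw [setAverage_eq, smul_eq_mul, measureReal_def]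
  rw [this, measureReal_def]; ring

lemma avg_qf_nonneg (hW : IsMatrixWeight V) (x : Fin n → ℝ) {r : ℝ} (hr : 0 < r)
    (e : Fin d → ℝ) : 0 ≤ ⨍ y in cube x r, qf (V y) e := by
  rw [setAverage_eq, smul_eq_mul]
  apply mul_nonneg (by positivity)
  apply integral_nonneg_of_ae
  filter_upwards [ae_restrict_of_ae hW.2.1] with y hy
  exact qf_nonneg_of_psd hy e

end Int

end Aux

theorem statement11 {n d : ℕ} (hn : 1 ≤ n) (hd : 1 ≤ d) (p C_V : ℝ) (hp : 1 < p)
    (hCV : 0 < C_V) (V : (Fin n → ℝ) → Matrix (Fin d) (Fin d) ℝ)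
    (hW : IsMatrixWeight V) (hBp : MemBp p C_V V) (hAinf : MemAinf V) :
    ∃ C : ℝ, 0 < C ∧ MemBpScalar p C fun x => lam1 (V x) := by
  have hd0 : 0 < d := hd
  have hp0 : (0:ℝ) ≤ p := by linarith
  have h1p : (0:ℝ) ≤ 1 / p := by positivity
  have mlam : Measurable fun x => lam1 (V x) := measurable_lam1V hd0 hW.1
  -- integrability of lam1 ^ p on cubes
  have intLam1Pow : ∀ (x : Fin n → ℝ) (r : ℝ), 0 < r →
      IntegrableOn (fun y => lam1 (V y) ^ p) (cube x r) := by
    intro x r hr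
    apply Integrable.mono' (hBp.1 x r hr)
    · exact ((Real.continuous_rpow_const hp0).measurable.comp mlam).aestronglyMeasurable
    · filter_upwards [ae_restrict_of_ae hW.2.1] with y hy
      have h0 : 0 ≤ lam1 (V y) := lam1_nonneg hd0 hy
      rw [Real.norm_eq_abs, abs_of_nonneg (Real.rpow_nonneg h0 p)]
      exact Real.rpow_le_rpow h0 (lam1_le_opNorm hd0 _) hp0
  -- integrability of lam1 on cubes
  have intLam1 : ∀ (x : Fin n → ℝ) (r : ℝ), 0 < r →
      IntegrableOn (fun y => lam1 (V y)) (cube x r) := by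
    intro x r hr
    apply Integrable.mono' (hW.2.2 x r hr) mlam.aestronglyMeasurable
    filter_upwards [ae_restrict_of_ae hW.2.1] with y hy
    rw [Real.norm_eq_abs, abs_of_nonneg (lam1_nonneg hd0 hy)]
    exact lam1_le_opNorm hd0 _
  obtain ⟨δ, hδ, hA⟩ := hAinf (1/2) (by norm_num)
  refine ⟨C_V * (2 / δ), by positivity, intLam1Pow, ?_⟩
  intro x r hr
  have hT := volume_cube_toReal_pos x r hr
  obtain ⟨e₀, he₀, hMe₀⟩ := lam1_attained hd0 (matAvg V (cube x r))
  -- step 1 : average of lam1^p ≤ average of qf e₀ ^ p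
  have intQfPow : IntegrableOn (fun y => qf (V y) e₀ ^ p) (cube x r) := by
    apply Integrable.mono' (hBp.1 x r hr)
    · exact ((Real.continuous_rpow_const hp0).measurable.comp
        (measurable_qfV hW.1 e₀)).aestronglyMeasurable
    · filter_upwards [ae_restrict_of_ae hW.2.1] with y hy
      have h0 : 0 ≤ qf (V y) e₀ := qf_nonneg_of_psd hy e₀
      rw [Real.norm_eq_abs, abs_of_nonneg (Real.rpow_nonneg h0 p)]
      exact Real.rpow_le_rpow h0 (qf_le_opNorm he₀ _) hp0
  have step1 : (⨍ y in cube x r, lam1 (V y) ^ p) ≤ ⨍ y in cube x r, qf (V y) e₀ ^ p := by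
    rw [setAverage_eq, setAverage_eq, smul_eq_mul, smul_eq_mul]
    apply mul_le_mul_of_nonneg_left _ (by positivity)
    apply integral_mono_ae (intLam1Pow x r hr) intQfPow
    filter_upwards [ae_restrict_of_ae hW.2.1] with y hy
    exact Real.rpow_le_rpow (lam1_nonneg hd0 hy) (lam1_le_qf he₀ (V y)) hp0
  have step0 : 0 ≤ ⨍ y in cube x r, lam1 (V y) ^ p := by
    rw [setAverage_eq, smul_eq_mul]
    apply mul_nonneg (by positivity)
    apply integral_nonneg_of_ae
    filter_upwards [ae_restrict_of_ae hW.2.1] with y hy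
    exact Real.rpow_nonneg (lam1_nonneg hd0 hy) p
  have h1 : (⨍ y in cube x r, lam1 (V y) ^ p) ^ (1/p) ≤
      (⨍ y in cube x r, qf (V y) e₀ ^ p) ^ (1/p) := Real.rpow_le_rpow step0 step1 h1p
  have h2 : (⨍ y in cube x r, qf (V y) e₀ ^ p) ^ (1/p) ≤
      C_V * lam1 (matAvg V (cube x r)) := by
    rw [hMe₀]
    exact hBp.2 x r hr e₀
  -- step 2 : lam1 of the average ≤ (2/δ) * average of lam1
  have hSmeas : MeasurableSet {y | δ * lam1 (matAvg V (cube x r)) ≤ lam1 (V y)} :=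
    measurableSet_le measurable_const mlam
  have hsub : {y ∈ cube x r | (V y - δ • matAvg V (cube x r)).PosSemidef} ⊆
      {y | δ * lam1 (matAvg V (cube x r)) ≤ lam1 (V y)} ∩ cube x r := by
    rintro y ⟨hyQ, hpsd⟩
    refine ⟨?_, hyQ⟩
    show δ * lam1 (matAvg V (cube x r)) ≤ lam1 (V y)
    apply le_lam1 hd0
    intro e he
    have hq := qf_nonneg_of_psd hpsd e
    rw [qf_sub, qf_smul] at hq
    have hl := lam1_le_qf he (matAvg V (cube x r))
    nlinarith [hδ.le]
  have hvol : ENNReal.ofReal (1/2) * volume (cube x r) ≤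
      volume ({y | δ * lam1 (matAvg V (cube x r)) ≤ lam1 (V y)} ∩ cube x r) := by
    have h := hA x r hr
    rw [show (1 : ℝ) - 1/2 = 1/2 by norm_num] at h
    exact h.trans (measure_mono hsub)
  have hMnn : 0 ≤ lam1 (matAvg V (cube x r)) := by
    rw [hMe₀, avg_qf hW x hr e₀]
    exact avg_qf_nonneg hW x hr e₀
  have hnn : 0 ≤ᵐ[volume.restrict (cube x r)] fun y => lam1 (V y) := by
    filter_upwards [ae_restrict_of_ae hW.2.1] with y hy
    exact lam1_nonneg hd0 hy
  have markov := mul_meas_ge_le_integral_of_nonneg hnn (intLam1 x r hr)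
    (δ * lam1 (matAvg V (cube x r)))
  rw [measureReal_restrict_apply hSmeas] at markov
  have htoReal : (1/2) * (volume (cube x r)).toReal ≤
      (volume ({y | δ * lam1 (matAvg V (cube x r)) ≤ lam1 (V y)} ∩ cube x r)).toReal := by
    have hfin : volume ({y | δ * lam1 (matAvg V (cube x r)) ≤ lam1 (V y)} ∩ cube x r) ≠ ⊤ :=
      ((measure_mono Set.inter_subset_right).trans_lt (volume_cube_lt_top x r hr)).ne
    have := ENNReal.toReal_mono hfin hvol
    rwa [ENNReal.toReal_mul, ENNReal.toReal_ofReal (by norm_num : (0:ℝ) ≤ 1/2)] at this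
  have hInt : (δ * lam1 (matAvg V (cube x r))) * ((1/2) * (volume (cube x r)).toReal) ≤
      ∫ y in cube x r, lam1 (V y) := by
    refine le_trans ?_ markov
    exact mul_le_mul_of_nonneg_left htoReal (mul_nonneg hδ.le hMnn)
  have havg : (δ/2) * lam1 (matAvg V (cube x r)) ≤ ⨍ y in cube x r, lam1 (V y) := by
    rw [setAverage_eq, smul_eq_mul]
    calc (δ/2) * lam1 (matAvg V (cube x r))
        = (volume (cube x r)).toReal⁻¹ *
          ((δ * lam1 (matAvg V (cube x r))) * ((1/2) * (volume (cube x r)).toReal)) := by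
          field_simp
          try ring
      _ ≤ (volume (cube x r)).toReal⁻¹ * ∫ y in cube x r, lam1 (V y) :=
          mul_le_mul_of_nonneg_left hInt (inv_nonneg.2 hT.le)
  have h3 : lam1 (matAvg V (cube x r)) ≤ (2/δ) * ⨍ y in cube x r, lam1 (V y) := by
    have h4 : (2/δ) * ((δ/2) * lam1 (matAvg V (cube x r))) ≤
        (2/δ) * ⨍ y in cube x r, lam1 (V y) :=
      mul_le_mul_of_nonneg_left havg (by positivity)
    calc lam1 (matAvg V (cube x r)) = (2/δ) * ((δ/2) * lam1 (matAvg V (cube x r))) := by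
          field_simp
          try ring
      _ ≤ _ := h4
  calc (⨍ y in cube x r, lam1 (V y) ^ p) ^ (1/p)
      ≤ C_V * lam1 (matAvg V (cube x r)) := h1.trans h2
    _ ≤ C_V * ((2/δ) * ⨍ y in cube x r, lam1 (V y)) :=
        mul_le_mul_of_nonneg_left h3 hCV.le
    _ = C_V * (2/δ) * ⨍ y in cube x r, lam1 (V y) := by ring
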